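/- Let ξ_1,…,ξ_n and η_1,…,η_n be random variables such that all of ξ_1,…,ξ_n, η_1,…,η_n are mutually independent, each ξ_i and each η_i is symmetric (i.e. distributed as its negative), and suppose there is a constant c ≥ 1 such that for every i and every t > 0: P(|ξ_i| ≥ t) ≤ c · P(c|η_i| ≥ t). Then for every convex function f : ℝⁿ → ℝ (for which the expectations below are finite): E f(ξ_1,…,ξ_n) ≤ E f(c² η_1,…, c² η_n). -/

import Mathlib

open MeasureTheory ProbabilityTheory Real

noncomputable section

section AuxiliaryLemmas

open Set

lemma tail_set_le {μ ν : Measure ℝ} [IsProbabilityMeasure μ] [IsProbabilityMeasure ν]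
    {c : ℝ} (hc : 1 ≤ c)
    (htail : ∀ t : ℝ, 0 < t → (μ {x | t ≤ |x|}).toReal ≤ c * (ν {x | t ≤ c * |x|}).toReal)
    {G : ℝ → ℝ} (hGe : ∀ t, G (-t) = G t) (hG0 : G 0 = 0)
    (hmono : ∀ a b : ℝ, 0 ≤ a → a ≤ b → G a ≤ G b)
    {lam : ℝ} (hlam : 0 < lam) :
    μ {x | lam < G x} ≤ ENNReal.ofReal c * ν {x | lam < G (c * x)} := by
  have hc0 : (0:ℝ) < c := lt_of_lt_of_le one_pos hc
  have htail' : ∀ t : ℝ, 0 < t →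
      μ {x | t ≤ |x|} ≤ ENNReal.ofReal c * ν {x | t ≤ c * |x|} := by
    intro t ht
    calc μ {x | t ≤ |x|} = ENNReal.ofReal ((μ {x | t ≤ |x|}).toReal) :=
          (ENNReal.ofReal_toReal (measure_ne_top _ _)).symm
      _ ≤ ENNReal.ofReal (c * (ν {x | t ≤ c * |x|}).toReal) :=
          ENNReal.ofReal_le_ofReal (htail t ht)
      _ = ENNReal.ofReal c * ENNReal.ofReal ((ν {x | t ≤ c * |x|}).toReal) :=
          ENNReal.ofReal_mul hc0.le
      _ = ENNReal.ofReal c * ν {x | t ≤ c * |x|} := by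
          rw [ENNReal.ofReal_toReal (measure_ne_top _ _)]
  have GAbs : ∀ x : ℝ, G x = G |x| := by
    intro x
    rcases abs_cases x with ⟨h, _⟩ | ⟨h, _⟩
    · rw [h]
    · rw [h, hGe]
  have GcAbs : ∀ x : ℝ, G (c * x) = G (c * |x|) := by
    intro x
    rw [GAbs (c * x), abs_mul, abs_of_pos hc0]
  set T : Set ℝ := {t : ℝ | 0 ≤ t ∧ lam < G t} with hTdef
  by_cases hT : T.Nonempty
  swap
  · have hempty : {x : ℝ | lam < G x} = ∅ := by
      ext x
      simp only [mem_setOf_eq, mem_empty_iff_false, iff_false, not_lt]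
      by_contra h
      push_neg at h
      exact hT ⟨|x|, abs_nonneg x, by rw [← GAbs]; exact h⟩
    rw [hempty]
    simp
  have hbdd : BddBelow T := ⟨0, fun t ht => ht.1⟩
  set s := sInf T with hsdef
  have hs0 : 0 ≤ s := le_csInf hT fun t ht => ht.1
  have hsub : {x : ℝ | lam < G x} ⊆ {x : ℝ | s ≤ |x|} := by
    intro x hx
    exact csInf_le hbdd ⟨abs_nonneg x, by rw [← GAbs]; exact hx⟩
  by_cases hsT : lam < G s
  · have hspos : 0 < s := by
      rcases eq_or_lt_of_le hs0 with h | h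
      · exfalso; rw [← h, hG0] at hsT; linarith
      · exact h
    calc μ {x : ℝ | lam < G x} ≤ μ {x : ℝ | s ≤ |x|} := measure_mono hsub
      _ ≤ ENNReal.ofReal c * ν {x : ℝ | s ≤ c * |x|} := htail' s hspos
      _ ≤ ENNReal.ofReal c * ν {x : ℝ | lam < G (c * x)} := by
          refine mul_le_mul_right (measure_mono ?_) _
          intro x hx
          simp only [mem_setOf_eq] at hx ⊢
          rw [GcAbs]
          exact lt_of_lt_of_le hsT (hmono s (c * |x|) hs0 hx)
  · have hsub2 : {x : ℝ | lam < G x} ⊆ {x : ℝ | s < |x|} := by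
      intro x hx
      have h1 : s ≤ |x| := hsub hx
      rcases eq_or_lt_of_le h1 with h | h
      · exfalso; apply hsT; rw [h]; rw [← GAbs]; exact hx
      · exact h
    have hν2 : {x : ℝ | s < c * |x|} ⊆ {x : ℝ | lam < G (c * x)} := by
      intro x hx
      simp only [mem_setOf_eq] at hx ⊢
      obtain ⟨u, huT, hu⟩ := exists_lt_of_csInf_lt hT hx
      rw [GcAbs]
      exact lt_of_lt_of_le huT.2 (hmono u (c * |x|) huT.1 hu.le)
    have hUnion : {x : ℝ | s < |x|} = ⋃ n : ℕ, {x : ℝ | s + 1/(n+1 : ℝ) ≤ |x|} := by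
      ext x
      simp only [mem_setOf_eq, mem_iUnion]
      constructor
      · intro h
        obtain ⟨n, hn⟩ := exists_nat_one_div_lt (sub_pos.mpr h)
        exact ⟨n, by linarith⟩
      · rintro ⟨n, hn⟩
        have : (0:ℝ) < 1/(n+1 : ℝ) := by positivity
        linarith
    have hmonoU : Monotone fun n : ℕ => {x : ℝ | s + 1/(n+1 : ℝ) ≤ |x|} := by
      intro m n hmn x hx
      simp only [mem_setOf_eq] at hx ⊢
      have : 1/(n+1 : ℝ) ≤ 1/(m+1 : ℝ) := by
        apply one_div_le_one_div_of_le (by positivity)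
        exact_mod_cast by omega
      linarith
    calc μ {x : ℝ | lam < G x} ≤ μ {x : ℝ | s < |x|} := measure_mono hsub2
      _ = ⨆ n : ℕ, μ {x : ℝ | s + 1/(n+1 : ℝ) ≤ |x|} := by
          rw [hUnion]
          exact hmonoU.directed_le.measure_iUnion
      _ ≤ ENNReal.ofReal c * ν {x : ℝ | lam < G (c * x)} := by
          refine iSup_le fun n => ?_
          have hpos : (0:ℝ) < s + 1/(n+1 : ℝ) := by positivity
          refine le_trans (htail' _ hpos) (mul_le_mul_right (measure_mono ?_) _)
          refine subset_trans ?_ hν2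
          intro x hx
          simp only [mem_setOf_eq] at hx ⊢
          have : (0:ℝ) < 1/(n+1 : ℝ) := by positivity
          linarith

lemma symm_split {μ : Measure ℝ} [IsProbabilityMeasure μ] (hμs : μ.map (fun x => -x) = μ)
    {g : ℝ → ℝ} (hgm : Measurable g) (hgnn : ∀ x, 0 ≤ g x)
    (hsnn : ∀ x, 0 ≤ (g x + g (-x))/2 - g 0) :
    ∫⁻ x, ENNReal.ofReal (g x) ∂μ
      = ∫⁻ x, ENNReal.ofReal ((g x + g (-x))/2 - g 0) ∂μ + ENNReal.ofReal (g 0) := by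
  have hneg : ∫⁻ x, ENNReal.ofReal (g (-x)) ∂μ = ∫⁻ x, ENNReal.ofReal (g x) ∂μ := by
    rw [← hμs, lintegral_map hgm.ennreal_ofReal measurable_neg]
    rw [hμs]
  have hGm : Measurable fun x : ℝ => ENNReal.ofReal ((g x + g (-x))/2 - g 0) := by
    apply Measurable.ennreal_ofReal
    exact (((hgm.add (hgm.comp measurable_neg)).div_const 2).sub_const _)
  have hpt : ∀ x : ℝ, ENNReal.ofReal (g x) + ENNReal.ofReal (g (-x))
      = 2 * (ENNReal.ofReal ((g x + g (-x))/2 - g 0) + ENNReal.ofReal (g 0)) := by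
    intro x
    rw [← ENNReal.ofReal_add (hgnn x) (hgnn (-x)),
      ← ENNReal.ofReal_add (hsnn x) (hgnn 0)]
    have h2 : g x + g (-x) = 2 * ((g x + g (-x))/2 - g 0 + g 0) := by ring
    rw [h2, ENNReal.ofReal_mul (by norm_num : (0:ℝ) ≤ 2)]
    norm_num
  have hsum : (∫⁻ x, ENNReal.ofReal (g x) ∂μ) + ∫⁻ x, ENNReal.ofReal (g x) ∂μ
      = 2 * (∫⁻ x, ENNReal.ofReal ((g x + g (-x))/2 - g 0) ∂μ + ENNReal.ofReal (g 0)) := by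
    calc (∫⁻ x, ENNReal.ofReal (g x) ∂μ) + ∫⁻ x, ENNReal.ofReal (g x) ∂μ
        = (∫⁻ x, ENNReal.ofReal (g x) ∂μ) + ∫⁻ x, ENNReal.ofReal (g (-x)) ∂μ := by rw [hneg]
      _ = ∫⁻ x, (ENNReal.ofReal (g x) + ENNReal.ofReal (g (-x))) ∂μ :=
          (lintegral_add_left hgm.ennreal_ofReal _).symm
      _
        = ∫⁻ x, 2 * (ENNReal.ofReal ((g x + g (-x))/2 - g 0) + ENNReal.ofReal (g 0)) ∂μ := by
          exact lintegral_congr hpt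
      _ = 2 * ∫⁻ x, (ENNReal.ofReal ((g x + g (-x))/2 - g 0) + ENNReal.ofReal (g 0)) ∂μ := by
          exact lintegral_const_mul 2 (hGm.add measurable_const)
      _ = 2 * (∫⁻ x, ENNReal.ofReal ((g x + g (-x))/2 - g 0) ∂μ + ENNReal.ofReal (g 0)) := by
          rw [lintegral_add_right _ measurable_const, lintegral_const, measure_univ, mul_one]
  have h2A : 2 * ∫⁻ x, ENNReal.ofReal (g x) ∂μ
      = 2 * (∫⁻ x, ENNReal.ofReal ((g x + g (-x))/2 - g 0) ∂μ + ENNReal.ofReal (g 0)) := by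
    rw [two_mul]; exact hsum
  exact (ENNReal.mul_right_inj (by norm_num) (by norm_num)).mp h2A

lemma onedim {μ ν : Measure ℝ} [IsProbabilityMeasure μ] [IsProbabilityMeasure ν]
    (hμs : μ.map (fun x => -x) = μ) (hνs : ν.map (fun x => -x) = ν)
    {c : ℝ} (hc : 1 ≤ c)
    (htail : ∀ t : ℝ, 0 < t → (μ {x | t ≤ |x|}).toReal ≤ c * (ν {x | t ≤ c * |x|}).toReal)
    {g : ℝ → ℝ} (hg : ConvexOn ℝ Set.univ g) (hgc : Continuous g) (hgnn : ∀ x, 0 ≤ g x) :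
    ∫⁻ x, ENNReal.ofReal (g x) ∂μ ≤ ∫⁻ x, ENNReal.ofReal (g (c^2 * x)) ∂ν := by
  have hc0 : (0:ℝ) < c := lt_of_lt_of_le one_pos hc
  set G : ℝ → ℝ := fun t => (g t + g (-t))/2 - g 0 with hGdef
  have hGc : Continuous G := (((hgc.add (hgc.comp continuous_neg)).div_const 2).sub continuous_const)
  have hGe : ∀ t, G (-t) = G t := fun t => by simp only [hGdef, neg_neg]; ring
  have hG0 : G 0 = 0 := by simp [hGdef]
  have hGconv : ConvexOn ℝ Set.univ G := by
    refine ⟨convex_univ, ?_⟩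
    intro x _ y _ a b ha hb hab
    have h1 := hg.2 (mem_univ x) (mem_univ y) ha hb hab
    have h2 := hg.2 (mem_univ (-x)) (mem_univ (-y)) ha hb hab
    simp only [smul_eq_mul] at h1 h2 ⊢
    have hneg : -(a * x + b * y) = a * (-x) + b * (-y) := by ring
    have hg0 : a * g 0 + b * g 0 = g 0 := by rw [← add_mul, hab, one_mul]
    simp only [hGdef, hneg]
    linarith
  have hGnn : ∀ t, 0 ≤ G t := by
    intro t
    have h := hg.2 (mem_univ t) (mem_univ (-t)) (by norm_num : (0:ℝ) ≤ 1/2)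
      (by norm_num : (0:ℝ) ≤ 1/2) (by norm_num)
    simp only [smul_eq_mul] at h
    have : (1/2 : ℝ) * t + (1/2) * (-t) = 0 := by ring
    rw [this] at h
    simp only [hGdef]
    linarith
  have hmono : ∀ a b : ℝ, 0 ≤ a → a ≤ b → G a ≤ G b := by
    intro a b ha hab
    rcases eq_or_lt_of_le (le_trans ha hab) with hb | hb
    · have : a = 0 := le_antisymm (hab.trans hb.symm.le) ha
      rw [this, ← hb]
    · set θ : ℝ := (a + b) / (2 * b) with hθdef
      have hθ0 : 0 ≤ θ := by positivity
      have hθ1 : 0 ≤ 1 - θ := by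
        rw [hθdef]
        rw [sub_nonneg, div_le_one (by positivity)]
        linarith
      have hcomb := hGconv.2 (mem_univ b) (mem_univ (-b)) hθ0 hθ1 (by ring)
      simp only [smul_eq_mul] at hcomb
      have hpt : θ * b + (1 - θ) * (-b) = a := by
        rw [hθdef]; field_simp; ring
      rw [hpt, hGe] at hcomb
      calc G a ≤ θ * G b + (1 - θ) * G b := hcomb
        _ = G b := by ring
  have hkey : ∀ x : ℝ, c * G (c * x) ≤ G (c^2 * x) := by
    intro x
    have ha1 : (0:ℝ) ≤ 1/c := by positivity
    have hb1 : (0:ℝ) ≤ 1 - 1/c := by rw [sub_nonneg, div_le_one hc0]; exact hc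
    have hab1 : 1/c + (1 - 1/c) = 1 := by ring
    have hcomb := hGconv.2 (mem_univ (c^2 * x)) (mem_univ 0) ha1 hb1 hab1
    simp only [smul_eq_mul] at hcomb
    have hpt : 1/c * (c^2 * x) + (1 - 1/c) * 0 = c * x := by field_simp; ring
    rw [hpt, hG0, mul_zero, add_zero] at hcomb
    have := mul_le_mul_of_nonneg_left hcomb hc0.le
    calc c * G (c * x) ≤ c * (1/c * G (c^2 * x)) := this
      _ = G (c^2 * x) := by field_simp
  -- symmetrized splits
  have hsplitμ := symm_split hμs hgc.measurable hgnn (fun x => hGnn x)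
  have hg2eq : ∀ x : ℝ, (g (c^2 * x) + g (-(c^2 * x)))/2 - g 0 = G (c^2 * x) :=
    fun x => rfl
  have hsplitν : ∫⁻ x, ENNReal.ofReal (g (c^2 * x)) ∂ν
      = ∫⁻ x, ENNReal.ofReal (G (c^2 * x)) ∂ν + ENNReal.ofReal (g 0) := by
    have := symm_split hνs (g := fun x => g (c^2 * x))
      (hgc.measurable.comp (measurable_const_mul _)) (fun x => hgnn _)
      (fun x => by
        show 0 ≤ (g (c^2 * x) + g (c^2 * -x))/2 - g (c^2 * 0)
        rw [mul_neg, mul_zero, hg2eq x]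
        exact hGnn _)
    simp only [mul_neg, mul_zero] at this
    simp only [hg2eq] at this
    exact this
  rw [hsplitμ, hsplitν]
  refine add_le_add ?_ le_rfl
  -- layer cake
  have hlayer1 : ∫⁻ x, ENNReal.ofReal (G x) ∂μ = ∫⁻ lam in Ioi (0:ℝ), μ {x | lam < G x} :=
    lintegral_eq_lintegral_meas_lt μ (ae_of_all _ hGnn) hGc.measurable.aemeasurable
  have hlayer2 : ∫⁻ x, ENNReal.ofReal (G (c * x)) ∂ν
      = ∫⁻ lam in Ioi (0:ℝ), ν {x | lam < G (c * x)} :=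
    lintegral_eq_lintegral_meas_lt ν (ae_of_all _ fun x => hGnn _)
      (hGc.measurable.comp (measurable_const_mul _)).aemeasurable
  have hAnti : Antitone fun lam : ℝ => ν {x | lam < G (c * x)} := by
    intro a b hab
    exact measure_mono fun x hx => lt_of_le_of_lt hab hx
  have hmid : ∫⁻ lam in Ioi (0:ℝ), μ {x | lam < G x}
      ≤ ∫⁻ lam in Ioi (0:ℝ), ENNReal.ofReal c * ν {x | lam < G (c * x)} := by
    refine setLIntegral_mono (measurable_const.mul hAnti.measurable) ?_
    intro lam hlam
    exact tail_set_le hc htail hGe hG0 hmono hlam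
  have hpull : ∫⁻ lam in Ioi (0:ℝ), ENNReal.ofReal c * ν {x | lam < G (c * x)}
      = ENNReal.ofReal c * ∫⁻ lam in Ioi (0:ℝ), ν {x | lam < G (c * x)} :=
    lintegral_const_mul' _ _ ENNReal.ofReal_ne_top
  have hfinal : ENNReal.ofReal c * ∫⁻ x, ENNReal.ofReal (G (c * x)) ∂ν
      ≤ ∫⁻ x, ENNReal.ofReal (G (c^2 * x)) ∂ν := by
    rw [← lintegral_const_mul' _ _ ENNReal.ofReal_ne_top]
    refine lintegral_mono fun x => ?_
    rw [← ENNReal.ofReal_mul hc0.le]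
    exact ENNReal.ofReal_le_ofReal (hkey x)
  calc ∫⁻ x, ENNReal.ofReal (G x) ∂μ
      = ∫⁻ lam in Ioi (0:ℝ), μ {x | lam < G x} := hlayer1
    _ ≤ ∫⁻ lam in Ioi (0:ℝ), ENNReal.ofReal c * ν {x | lam < G (c * x)} := hmid
    _ = ENNReal.ofReal c * ∫⁻ lam in Ioi (0:ℝ), ν {x | lam < G (c * x)} := hpull
    _ = ENNReal.ofReal c * ∫⁻ x, ENNReal.ofReal (G (c * x)) ∂ν := by rw [hlayer2]
    _ ≤ ∫⁻ x, ENNReal.ofReal (G (c^2 * x)) ∂ν := hfinal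

lemma pi_map_coord {n : ℕ} (m : Fin n → Measure ℝ) [∀ i, IsProbabilityMeasure (m i)]
    (φ : Fin n → ℝ → ℝ) (hφ : ∀ i, Measurable (φ i)) :
    (Measure.pi m).map (fun x i => φ i (x i)) = Measure.pi (fun i => (m i).map (φ i)) := by
  haveI : ∀ i, IsProbabilityMeasure ((m i).map (φ i)) :=
    fun i => Measure.isProbabilityMeasure_map (hφ i).aemeasurable
  have hmeas : Measurable (fun (x : Fin n → ℝ) i => φ i (x i)) :=
    measurable_pi_lambda _ fun i => (hφ i).comp (measurable_pi_apply i)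
  refine (Measure.pi_eq fun s hs => ?_).symm
  rw [Measure.map_apply hmeas (MeasurableSet.univ_pi hs)]
  have hpre : (fun (x : Fin n → ℝ) i => φ i (x i)) ⁻¹' Set.pi Set.univ s
      = Set.pi Set.univ (fun i => φ i ⁻¹' s i) := by
    ext x; simp [Set.mem_pi]
  rw [hpre, Measure.pi_pi]
  exact Finset.prod_congr rfl fun i _ => (Measure.map_apply (hφ i) (hs i)).symm

lemma map_eq_pi {Ω : Type*} [MeasurableSpace Ω] (μ : Measure Ω) [IsProbabilityMeasure μ]
    {n : ℕ} (ξ : Fin n → Ω → ℝ) (hm : ∀ i, Measurable (ξ i))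
    (h : ∀ s : Fin n → Set ℝ, (∀ i, MeasurableSet (s i)) →
      μ (⋂ i, ξ i ⁻¹' s i) = ∏ i, μ (ξ i ⁻¹' s i)) :
    μ.map (fun ω i => ξ i ω) = Measure.pi (fun i => μ.map (ξ i)) := by
  haveI : ∀ i, IsProbabilityMeasure (μ.map (ξ i)) :=
    fun i => Measure.isProbabilityMeasure_map (hm i).aemeasurable
  refine (Measure.pi_eq fun s hs => ?_).symm
  rw [Measure.map_apply (measurable_pi_lambda _ hm) (MeasurableSet.univ_pi hs)]
  have hpre : (fun ω i => ξ i ω) ⁻¹' Set.pi Set.univ s = ⋂ i, ξ i ⁻¹' s i := by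
    ext ω; simp [Set.mem_pi]
  rw [hpre, h s hs]
  exact Finset.prod_congr rfl fun i _ => (Measure.map_apply (hm i) (hs i)).symm

section slice

variable {N : ℕ}

lemma insertNth_affine (j : Fin (N + 1)) (y : Fin N → ℝ) (t : ℝ) :
    (j.insertNth t y : Fin (N+1) → ℝ)
      = (Fin.insertNth j (0:ℝ) y : Fin (N+1) → ℝ)
        + t • (Pi.single j (1:ℝ) : Fin (N+1) → ℝ) := by
  funext k
  by_cases hk : k = j
  · subst hk
    simp
  · obtain ⟨k', rfl⟩ := Fin.exists_succAbove_eq hk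
    simp [Pi.single_eq_of_ne (Fin.succAbove_ne j k')]

lemma slice_convexOn {F : (Fin (N+1) → ℝ) → ℝ} (hF : ConvexOn ℝ Set.univ F)
    (j : Fin (N + 1)) (y : Fin N → ℝ) :
    ConvexOn ℝ Set.univ (fun t : ℝ => F (j.insertNth t y)) := by
  refine ⟨convex_univ, ?_⟩
  intro t1 _ t2 _ a b ha hb hab
  have h := hF.2 (mem_univ (j.insertNth t1 y)) (mem_univ (j.insertNth t2 y)) ha hb hab
  simp only [smul_eq_mul]
  have hb' : b = 1 - a := by linarith
  subst hb'
  have hpt : (j.insertNth (a * t1 + (1 - a) * t2) y : Fin (N+1) → ℝ)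
      = a • (Fin.insertNth j t1 y : Fin (N+1) → ℝ)
        + (1 - a) • (Fin.insertNth j t2 y : Fin (N+1) → ℝ) := by
    rw [insertNth_affine, insertNth_affine j y t1, insertNth_affine j y t2]
    module
  rw [hpt]
  exact h

lemma slice_continuous {F : (Fin (N+1) → ℝ) → ℝ} (hFc : Continuous F)
    (j : Fin (N + 1)) (y : Fin N → ℝ) :
    Continuous (fun t : ℝ => F (j.insertNth t y)) := by
  have : (fun t : ℝ => F (j.insertNth t y))
      = fun t : ℝ => F ((Fin.insertNth j (0:ℝ) y : Fin (N+1) → ℝ)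
          + t • (Pi.single j (1:ℝ) : Fin (N+1) → ℝ)) := by
    funext t; rw [insertNth_affine]
  rw [this]
  exact hFc.comp (continuous_const.add (continuous_id.smul continuous_const))

end slice

lemma pi_swap_one {n : ℕ} (m m' : Fin n → Measure ℝ)
    [∀ i, IsProbabilityMeasure (m i)] [∀ i, IsProbabilityMeasure (m' i)]
    (j : Fin n)
    (hswap : ∀ g : ℝ → ℝ, ConvexOn ℝ Set.univ g → Continuous g → (∀ x, 0 ≤ g x) →
      ∫⁻ t, ENNReal.ofReal (g t) ∂(m j) ≤ ∫⁻ t, ENNReal.ofReal (g t) ∂(m' j))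
    (hrest : ∀ i, i ≠ j → m i = m' i)
    {F : (Fin n → ℝ) → ℝ} (hF : ConvexOn ℝ Set.univ F) (hFc : Continuous F)
    (hFnn : ∀ x, 0 ≤ F x) :
    ∫⁻ x, ENNReal.ofReal (F x) ∂(Measure.pi m)
      ≤ ∫⁻ x, ENNReal.ofReal (F x) ∂(Measure.pi m') := by
  have hn : 0 < n := j.pos
  obtain ⟨N, rfl⟩ : ∃ N, n = N + 1 := ⟨n - 1, by omega⟩
  have hrep : ∀ (mm : Fin (N+1) → Measure ℝ), (∀ i, IsProbabilityMeasure (mm i)) →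
      ∫⁻ x, ENNReal.ofReal (F x) ∂(Measure.pi mm)
        = ∫⁻ y, (∫⁻ t, ENNReal.ofReal (F (j.insertNth t y)) ∂(mm j))
            ∂(Measure.pi fun k => mm (j.succAbove k)) := by
    intro mm hmm
    haveI := hmm
    have hmp := measurePreserving_piFinSuccAbove mm j
    set e := MeasurableEquiv.piFinSuccAbove (fun _ : Fin (N+1) => ℝ) j with he
    have hins : ∀ p : ℝ × (Fin N → ℝ), e.symm p = j.insertNth p.1 p.2 := fun p => rfl
    have hfmeas : Measurable fun p : ℝ × (Fin N → ℝ) => ENNReal.ofReal (F (e.symm p)) :=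
      (hFc.measurable.comp e.symm.measurable).ennreal_ofReal
    calc ∫⁻ x, ENNReal.ofReal (F x) ∂(Measure.pi mm)
        = ∫⁻ x, ENNReal.ofReal (F (e.symm (e x))) ∂(Measure.pi mm) := by
          refine lintegral_congr fun x => ?_
          rw [e.symm_apply_apply]
      _ = ∫⁻ p, ENNReal.ofReal (F (e.symm p))
            ∂((mm j).prod (Measure.pi fun k => mm (j.succAbove k))) :=
          hmp.lintegral_comp hfmeas
      _ = ∫⁻ y, (∫⁻ t, ENNReal.ofReal (F (e.symm (t, y)))
            ∂(mm j)) ∂(Measure.pi fun k => mm (j.succAbove k)) :=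
          lintegral_prod_symm _ hfmeas.aemeasurable
      _ = _ := by
          refine lintegral_congr fun y => lintegral_congr fun t => ?_
          rw [hins]
  have hQ : (Measure.pi fun k => m (j.succAbove k)) = Measure.pi fun k => m' (j.succAbove k) := by
    congr 1
    funext k
    exact hrest _ (Fin.succAbove_ne j k)
  rw [hrep m inferInstance, hrep m' inferInstance, ← hQ]
  refine lintegral_mono fun y => ?_
  exact hswap _ (slice_convexOn hF j y) (slice_continuous hFc j y) (fun t => hFnn _)

lemma pi_swap_all {n : ℕ} (m m' : Fin n → Measure ℝ)
    [∀ i, IsProbabilityMeasure (m i)] [∀ i, IsProbabilityMeasure (m' i)]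
    (hswap : ∀ i, ∀ g : ℝ → ℝ, ConvexOn ℝ Set.univ g → Continuous g → (∀ x, 0 ≤ g x) →
      ∫⁻ t, ENNReal.ofReal (g t) ∂(m i) ≤ ∫⁻ t, ENNReal.ofReal (g t) ∂(m' i))
    {F : (Fin n → ℝ) → ℝ} (hF : ConvexOn ℝ Set.univ F) (hFc : Continuous F)
    (hFnn : ∀ x, 0 ≤ F x) :
    ∫⁻ x, ENNReal.ofReal (F x) ∂(Measure.pi m)
      ≤ ∫⁻ x, ENNReal.ofReal (F x) ∂(Measure.pi m') := by
  classical
  set κ : ℕ → Fin n → Measure ℝ := fun k i => if (i : ℕ) < k then m' i else m i with hκ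
  have hκprob : ∀ k i, IsProbabilityMeasure (κ k i) := by
    intro k i
    simp only [hκ]
    split <;> infer_instance
  have hchain : ∀ k : ℕ, ∫⁻ x, ENNReal.ofReal (F x) ∂(Measure.pi m)
      ≤ ∫⁻ x, ENNReal.ofReal (F x) ∂(Measure.pi (κ k)) := by
    intro k
    induction k with
    | zero =>
      have : κ 0 = m := by funext i; simp [hκ]
      rw [this]
    | succ k ih =>
      by_cases hk : k < n
      · refine le_trans ih ?_
        haveI := hκprob k
        haveI := hκprob (k+1)
        refine pi_swap_one (κ k) (κ (k+1)) ⟨k, hk⟩ ?_ ?_ hF hFc hFnn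
        · have e1 : κ k ⟨k, hk⟩ = m ⟨k, hk⟩ := if_neg (lt_irrefl k)
          have e2 : κ (k+1) ⟨k, hk⟩ = m' ⟨k, hk⟩ := if_pos (Nat.lt_succ_self k)
          rw [e1, e2]
          exact hswap ⟨k, hk⟩
        · intro i hi
          have hiv : (i : ℕ) ≠ k := fun h => hi (Fin.ext h)
          simp only [hκ]
          by_cases h2 : (i : ℕ) < k
          · rw [if_pos h2, if_pos (by omega)]
          · rw [if_neg h2, if_neg (by omega)]
      · have : κ (k+1) = κ k := by
          funext i
          have : (i : ℕ) < n := i.isLt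
          simp only [hκ]
          rw [if_pos (by omega), if_pos (by omega)]
        rw [this]
        exact ih
  have hfin : κ n = m' := by
    funext i
    simp only [hκ]
    rw [if_pos i.isLt]
  have := hchain n
  rwa [hfin] at this

end AuxiliaryLemmas

open Set in
/-- Lemma 2.4, contraction principle: comparison of expectations of
convex functions under a tail-domination assumption. -/
theorem contraction_principle {Ω : Type*} [MeasurableSpace Ω] (μ : Measure Ω)
    [IsProbabilityMeasure μ] (n : ℕ) (ξ η : Fin n → Ω → ℝ)
    (hξm : ∀ i, Measurable (ξ i)) (hηm : ∀ i, Measurable (η i))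
    -- all of ξ₁,…,ξₙ,η₁,…,ηₙ are mutually independent
    (hindep : iIndepFun (Sum.elim ξ η) μ)
    -- each ξᵢ and each ηᵢ is symmetric
    (hξsymm : ∀ i, Measure.map (ξ i) μ = Measure.map (fun ω => -(ξ i ω)) μ)
    (hηsymm : ∀ i, Measure.map (η i) μ = Measure.map (fun ω => -(η i ω)) μ)
    (c : ℝ) (hc : 1 ≤ c)
    -- tail comparison: P(|ξᵢ| ≥ t) ≤ c P(c|ηᵢ| ≥ t) for all t > 0
    (htail : ∀ i, ∀ t : ℝ, 0 < t →
      (μ {ω | t ≤ |ξ i ω|}).toReal ≤ c * (μ {ω | t ≤ c * |η i ω|}).toReal)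
    (f : (Fin n → ℝ) → ℝ) (hf : ConvexOn ℝ Set.univ f)
    -- the expectations below are assumed finite
    (hint₁ : Integrable (fun ω => f fun i => ξ i ω) μ)
    (hint₂ : Integrable (fun ω => f fun i => c ^ 2 * η i ω) μ) :
    (∫ ω, f (fun i => ξ i ω) ∂μ) ≤ ∫ ω, f (fun i => c ^ 2 * η i ω) ∂μ := by
  classical
  have hfc : Continuous f := by
    rw [← continuousOn_univ]
    exact hf.continuousOn isOpen_univ
  have hvecξ : Measurable (fun ω (i : Fin n) => ξ i ω) := measurable_pi_lambda _ hξm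
  have hvecη : Measurable (fun ω (i : Fin n) => η i ω) := measurable_pi_lambda _ hηm
  set μi : Fin n → Measure ℝ := fun i => μ.map (ξ i) with hμi
  set νi : Fin n → Measure ℝ := fun i => μ.map (η i) with hνi
  haveI hμiP : ∀ i, IsProbabilityMeasure (μi i) :=
    fun i => Measure.isProbabilityMeasure_map (hξm i).aemeasurable
  haveI hνiP : ∀ i, IsProbabilityMeasure (νi i) :=
    fun i => Measure.isProbabilityMeasure_map (hηm i).aemeasurable
  -- product formulas from independence
  have hprod := ProbabilityTheory.iIndepFun_iff_measure_inter_preimage_eq_mul.mp hindep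
  have hprodξ : ∀ s : Fin n → Set ℝ, (∀ i, MeasurableSet (s i)) →
      μ (⋂ i, ξ i ⁻¹' s i) = ∏ i, μ (ξ i ⁻¹' s i) := by
    intro s hs
    have h := hprod (Finset.univ.map ⟨Sum.inl, Sum.inl_injective⟩)
      (sets := Sum.elim s fun _ => Set.univ)
      (by
        intro i hi
        rcases i with k | k
        · exact hs k
        · exact MeasurableSet.univ)
    have hset : (⋂ i ∈ Finset.univ.map ⟨Sum.inl, Sum.inl_injective⟩,
        (Sum.elim ξ η i) ⁻¹' (Sum.elim s (fun _ => Set.univ) i)) = ⋂ i, ξ i ⁻¹' s i := by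
      ext ω
      simp only [Set.mem_iInter, Finset.mem_map, Finset.mem_univ, true_and,
        Function.Embedding.coeFn_mk]
      constructor
      · intro hω k
        exact hω (Sum.inl k) ⟨k, rfl⟩
      · rintro hω i ⟨k, rfl⟩
        exact hω k
    have hProdEq : (∏ i ∈ Finset.univ.map ⟨Sum.inl, Sum.inl_injective⟩,
        μ ((Sum.elim ξ η i) ⁻¹' (Sum.elim s (fun _ => Set.univ) i)))
        = ∏ i, μ (ξ i ⁻¹' s i) := by
      rw [Finset.prod_map]
      rfl
    rw [hset, hProdEq] at h
    exact h
  have hprodη : ∀ s : Fin n → Set ℝ, (∀ i, MeasurableSet (s i)) →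
      μ (⋂ i, η i ⁻¹' s i) = ∏ i, μ (η i ⁻¹' s i) := by
    intro s hs
    have h := hprod (Finset.univ.map ⟨Sum.inr, Sum.inr_injective⟩)
      (sets := Sum.elim (fun _ => Set.univ) s)
      (by
        intro i hi
        rcases i with k | k
        · exact MeasurableSet.univ
        · exact hs k)
    have hset : (⋂ i ∈ Finset.univ.map ⟨Sum.inr, Sum.inr_injective⟩,
        (Sum.elim ξ η i) ⁻¹' (Sum.elim (fun _ => Set.univ) s i)) = ⋂ i, η i ⁻¹' s i := by
      ext ω
      simp only [Set.mem_iInter, Finset.mem_map, Finset.mem_univ, true_and,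
        Function.Embedding.coeFn_mk]
      constructor
      · intro hω k
        exact hω (Sum.inr k) ⟨k, rfl⟩
      · rintro hω i ⟨k, rfl⟩
        exact hω k
    have hProdEq : (∏ i ∈ Finset.univ.map ⟨Sum.inr, Sum.inr_injective⟩,
        μ ((Sum.elim ξ η i) ⁻¹' (Sum.elim (fun _ => Set.univ) s i)))
        = ∏ i, μ (η i ⁻¹' s i) := by
      rw [Finset.prod_map]
      rfl
    rw [hset, hProdEq] at h
    exact h
  have hmapξvec : μ.map (fun ω i => ξ i ω) = Measure.pi μi := map_eq_pi μ ξ hξm hprodξ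
  have hmapηvec : μ.map (fun ω i => η i ω) = Measure.pi νi := map_eq_pi μ η hηm hprodη
  -- symmetry of the one-dimensional laws
  have hμisymm : ∀ i, (μi i).map (fun x : ℝ => -x) = μi i := by
    intro i
    rw [hμi]
    rw [Measure.map_map measurable_neg (hξm i)]
    exact (hξsymm i).symm
  have hνisymm : ∀ i, (νi i).map (fun x : ℝ => -x) = νi i := by
    intro i
    rw [hνi]
    rw [Measure.map_map measurable_neg (hηm i)]
    exact (hηsymm i).symm
  set νi' : Fin n → Measure ℝ := fun i => (νi i).map (fun x : ℝ => c^2 * x) with hνi'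
  haveI hνi'P : ∀ i, IsProbabilityMeasure (νi' i) :=
    fun i => Measure.isProbabilityMeasure_map (measurable_id.const_mul (c^2)).aemeasurable
  -- one-dimensional comparison for each coordinate
  have hswapAll : ∀ i, ∀ g : ℝ → ℝ, ConvexOn ℝ Set.univ g → Continuous g → (∀ x, 0 ≤ g x) →
      ∫⁻ t, ENNReal.ofReal (g t) ∂(μi i) ≤ ∫⁻ t, ENNReal.ofReal (g t) ∂(νi' i) := by
    intro i g hconv hcont hnn
    have hrhs : ∫⁻ t, ENNReal.ofReal (g t) ∂(νi' i)
        = ∫⁻ x, ENNReal.ofReal (g (c^2 * x)) ∂(νi i) := by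
      rw [hνi']
      exact lintegral_map hcont.measurable.ennreal_ofReal (measurable_id.const_mul (c^2))
    rw [hrhs]
    have htail2 : ∀ t : ℝ, 0 < t →
        ((μi i) {x | t ≤ |x|}).toReal ≤ c * ((νi i) {x | t ≤ c * |x|}).toReal := by
      intro t ht
      have e1 : (μi i) {x : ℝ | t ≤ |x|} = μ {ω | t ≤ |ξ i ω|} := by
        rw [hμi, Measure.map_apply (hξm i) (measurableSet_le measurable_const measurable_abs)]
        rfl
      have e2 : (νi i) {x : ℝ | t ≤ c * |x|} = μ {ω | t ≤ c * |η i ω|} := by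
        rw [hνi, Measure.map_apply (hηm i)
          (measurableSet_le measurable_const (measurable_abs.const_mul c))]
        rfl
      rw [e1, e2]
      exact htail i t ht
    exact onedim (hμisymm i) (hνisymm i) hc htail2 hconv hcont hnn
  -- symmetrized convex function
  set F : (Fin n → ℝ) → ℝ := fun x => (f x + f (-x))/2 - f 0 with hF
  have hFc : Continuous F := ((hfc.add (hfc.comp continuous_neg)).div_const 2).sub continuous_const
  have hFconv : ConvexOn ℝ Set.univ F := by
    refine ⟨convex_univ, ?_⟩
    intro x _ y _ a b ha hb hab
    have h1 := hf.2 (mem_univ x) (mem_univ y) ha hb hab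
    have h2 := hf.2 (mem_univ (-x)) (mem_univ (-y)) ha hb hab
    have hneg : a • (-x) + b • (-y) = -(a • x + b • y) := by module
    rw [hneg] at h2
    simp only [smul_eq_mul] at h1 h2
    simp only [hF, smul_eq_mul]
    have hg0 : a * f 0 + b * f 0 = f 0 := by rw [← add_mul, hab, one_mul]
    linarith
  have hFnn : ∀ x, 0 ≤ F x := by
    intro x
    have h := hf.2 (mem_univ x) (mem_univ (-x)) (by norm_num : (0:ℝ) ≤ 1/2)
      (by norm_num : (0:ℝ) ≤ 1/2) (by norm_num)
    have hptz : (1/2 : ℝ) • x + (1/2 : ℝ) • (-x) = 0 := by module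
    rw [hptz] at h
    simp only [hF, smul_eq_mul] at h ⊢
    linarith
  -- negation invariance of the product laws
  have hPneg : (Measure.pi μi).map (fun x : Fin n → ℝ => -x) = Measure.pi μi := by
    have hh : (fun x : Fin n → ℝ => -x) = fun (x : Fin n → ℝ) i => (fun t : ℝ => -t) (x i) := rfl
    rw [hh, pi_map_coord μi _ (fun i => measurable_neg)]
    congr 1
    funext i
    exact hμisymm i
  have hνi'symm : ∀ i, (νi' i).map (fun x : ℝ => -x) = νi' i := by
    intro i
    rw [hνi']
    calc ((νi i).map (fun x : ℝ => c^2 * x)).map (fun x : ℝ => -x)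
        = (νi i).map ((fun x : ℝ => -x) ∘ fun x : ℝ => c^2 * x) :=
          Measure.map_map measurable_neg (measurable_id.const_mul _)
      _ = (νi i).map ((fun x : ℝ => c^2 * x) ∘ fun x : ℝ => -x) := by
          congr 1
          funext x
          simp only [Function.comp_apply]
          ring
      _ = ((νi i).map (fun x : ℝ => -x)).map (fun x : ℝ => c^2 * x) :=
          (Measure.map_map (measurable_id.const_mul _) measurable_neg).symm
      _ = (νi i).map (fun x : ℝ => c^2 * x) := by rw [hνisymm i]
  have hP'neg : (Measure.pi νi').map (fun x : Fin n → ℝ => -x) = Measure.pi νi' := by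
    have hh : (fun x : Fin n → ℝ => -x) = fun (x : Fin n → ℝ) i => (fun t : ℝ => -t) (x i) := rfl
    rw [hh, pi_map_coord νi' _ (fun i => measurable_neg)]
    congr 1
    funext i
    exact hνi'symm i
  -- identify the two pushforward laws
  have hmapηc : μ.map (fun ω i => c^2 * η i ω) = Measure.pi νi' := by
    have h1 : (fun ω (i : Fin n) => c^2 * η i ω)
        = (fun (x : Fin n → ℝ) i => (fun t : ℝ => c^2 * t) (x i)) ∘ (fun ω i => η i ω) := rfl
    have h2 : Measurable (fun (x : Fin n → ℝ) i => (fun t : ℝ => c^2 * t) (x i)) :=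
      measurable_pi_lambda _ fun i => (measurable_id.const_mul _).comp (measurable_pi_apply i)
    rw [h1, ← Measure.map_map h2 hvecη, hmapηvec,
      pi_map_coord νi (fun _ (t : ℝ) => c^2 * t) (fun i => by fun_prop)]
  -- rewrite both sides as integrals over the product laws
  have hIμ : ∫ x, f x ∂(Measure.pi μi) = ∫ ω, f (fun i => ξ i ω) ∂μ := by
    rw [← hmapξvec]
    exact integral_map hvecξ.aemeasurable hfc.aestronglyMeasurable
  have hvecηc : Measurable (fun ω (i : Fin n) => c^2 * η i ω) :=
    measurable_pi_lambda _ fun i => (hηm i).const_mul _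
  have hIν : ∫ x, f x ∂(Measure.pi νi') = ∫ ω, f (fun i => c^2 * η i ω) ∂μ := by
    rw [← hmapηc]
    exact integral_map hvecηc.aemeasurable hfc.aestronglyMeasurable
  rw [← hIμ, ← hIν]
  -- integrability over the product laws
  have hfP : Integrable f (Measure.pi μi) := by
    rw [← hmapξvec]
    exact (integrable_map_measure hfc.aestronglyMeasurable hvecξ.aemeasurable).mpr hint₁
  have hfP' : Integrable f (Measure.pi νi') := by
    rw [← hmapηc]
    exact (integrable_map_measure hfc.aestronglyMeasurable hvecηc.aemeasurable).mpr hint₂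
  have hfnegP : Integrable (fun x => f (-x)) (Measure.pi μi) := by
    have h0 : Integrable f ((Measure.pi μi).map (fun x : Fin n → ℝ => -x)) := by
      rw [hPneg]; exact hfP
    exact (integrable_map_measure hfc.aestronglyMeasurable measurable_neg.aemeasurable).mp h0
  have hfnegP' : Integrable (fun x => f (-x)) (Measure.pi νi') := by
    have h0 : Integrable f ((Measure.pi νi').map (fun x : Fin n → ℝ => -x)) := by
      rw [hP'neg]; exact hfP'
    exact (integrable_map_measure hfc.aestronglyMeasurable measurable_neg.aemeasurable).mp h0
  -- symmetrization identities for the real integrals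
  have hEneg : ∫ x, f (-x) ∂(Measure.pi μi) = ∫ x, f x ∂(Measure.pi μi) := by
    have h0 := integral_map (μ := Measure.pi μi) (φ := fun x : Fin n → ℝ => -x)
      measurable_neg.aemeasurable hfc.aestronglyMeasurable
    rw [hPneg] at h0
    exact h0.symm
  have hEneg' : ∫ x, f (-x) ∂(Measure.pi νi') = ∫ x, f x ∂(Measure.pi νi') := by
    have h0 := integral_map (μ := Measure.pi νi') (φ := fun x : Fin n → ℝ => -x)
      measurable_neg.aemeasurable hfc.aestronglyMeasurable
    rw [hP'neg] at h0
    exact h0.symm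
  have hIadd : Integrable (fun x : Fin n → ℝ => (f x + f (-x))/2) (Measure.pi μi) :=
    (hfP.add hfnegP).div_const 2
  have hFsplit : ∫ x, F x ∂(Measure.pi μi) = ∫ x, f x ∂(Measure.pi μi) - f 0 := by
    rw [hF]
    rw [integral_sub hIadd (integrable_const _)]
    rw [integral_div, integral_add hfP hfnegP, integral_const, probReal_univ]
    rw [hEneg]
    simp
  have hIadd' : Integrable (fun x : Fin n → ℝ => (f x + f (-x))/2) (Measure.pi νi') :=
    (hfP'.add hfnegP').div_const 2
  have hFsplit' : ∫ x, F x ∂(Measure.pi νi') = ∫ x, f x ∂(Measure.pi νi') - f 0 := by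
    rw [hF]
    rw [integral_sub hIadd' (integrable_const _)]
    rw [integral_div, integral_add hfP' hfnegP', integral_const, probReal_univ]
    rw [hEneg']
    simp
  -- the main lintegral inequality
  have hlint := pi_swap_all μi νi' hswapAll hFconv hFc hFnn
  have hFintP : Integrable F (Measure.pi μi) :=
    ((hfP.add hfnegP).div_const 2).sub (integrable_const _)
  have hFintP' : Integrable F (Measure.pi νi') :=
    ((hfP'.add hfnegP').div_const 2).sub (integrable_const _)
  have hEF : ∫ x, F x ∂(Measure.pi μi)
      = (∫⁻ x, ENNReal.ofReal (F x) ∂(Measure.pi μi)).toReal :=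
    integral_eq_lintegral_of_nonneg_ae (ae_of_all _ hFnn) hFc.aestronglyMeasurable
  have hEF' : ∫ x, F x ∂(Measure.pi νi')
      = (∫⁻ x, ENNReal.ofReal (F x) ∂(Measure.pi νi')).toReal :=
    integral_eq_lintegral_of_nonneg_ae (ae_of_all _ hFnn) hFc.aestronglyMeasurable
  have hne : ∫⁻ x, ENNReal.ofReal (F x) ∂(Measure.pi νi') ≠ ⊤ :=
    hFintP'.lintegral_lt_top.ne
  have hFle : ∫ x, F x ∂(Measure.pi μi) ≤ ∫ x, F x ∂(Measure.pi νi') := by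
    rw [hEF, hEF']
    exact ENNReal.toReal_mono hne hlint
  linarith [hFsplit, hFsplit', hFle]

end
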